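/- Fix K ≥ 1, dimensions d₁,…,d_K, m, n, T ≥ 1, reals λ₁ ≥ 0, λ₂ ≥ 0, α ≥ 0, matrices Bᵏ ∈ ℝ^{d_k×m}, Xᵏ ∈ ℝ^{d_k×n}, and families A_l = (A_lᵏ)_{k=1}^K of m×n real matrices for l = 1,…,T. With ρᵢ, L, F, and the surrogate G defined as in Theorem 1, let (W_s)_{s≥1} be a sequence of families such that for every s, ρᵢ(W_s) ≠ 0 and ρᵢ(W_s − A_l) ≠ 0 for all i and l, and W_{s+1} minimizes the surrogate G built from W_s. Then the sequence of objective values (F(W_s))_{s≥1} is non-increasing and, being bounded below by 0, converges to a real limit. -/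

import Mathlib

open Finset Filter

/-- The `i`-th row norm of a multimodal family of matrices. -/
noncomputable def famRho {K m n : ℕ} (W : Fin K → Matrix (Fin m) (Fin n) ℝ) (i : Fin m) : ℝ :=
  Real.sqrt (∑ k, ∑ j, (W k i j) ^ 2)

/-- The multimodal least-squares reconstruction term `Σ_k ‖BᵏWᵏ − Xᵏ‖_F²`. -/
noncomputable def famLS {K m n : ℕ} {d : Fin K → ℕ}
    (B : ∀ k, Matrix (Fin (d k)) (Fin m) ℝ) (X : ∀ k, Matrix (Fin (d k)) (Fin n) ℝ)
    (W : Fin K → Matrix (Fin m) (Fin n) ℝ) : ℝ :=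
  ∑ k, ∑ p, ∑ j, ((B k * W k - X k) p j) ^ 2

/-- Along iterates of Algorithm 1 (each `W (s+1)` minimizes the surrogate built from `W s`,
whose row norms are nonzero), the objective values `F (W s)` form a non-increasing
sequence which, being bounded below by `0`, converges to a real limit. -/
theorem alg1_objective_converges
    (K m n T : ℕ) (hK : 1 ≤ K) (hT : 1 ≤ T)
    (d : Fin K → ℕ)
    (lam1 lam2 α : ℝ) (hlam1 : 0 ≤ lam1) (hlam2 : 0 ≤ lam2) (hα : 0 ≤ α)
    (B : ∀ k, Matrix (Fin (d k)) (Fin m) ℝ) (X : ∀ k, Matrix (Fin (d k)) (Fin n) ℝ)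
    (A : Fin T → Fin K → Matrix (Fin m) (Fin n) ℝ)
    (F : (Fin K → Matrix (Fin m) (Fin n) ℝ) → ℝ)
    (hF : ∀ W, F W = famLS B X W + lam1 * ∑ i, famRho W i +
        lam2 * ∑ l : Fin T, α ^ ((l : ℕ) + 1) *
          ∑ i, famRho (fun k => W k - A l k) i)
    (G : (Fin K → Matrix (Fin m) (Fin n) ℝ) → (Fin K → Matrix (Fin m) (Fin n) ℝ) → ℝ)
    (hG : ∀ Ws W, G Ws W = famLS B X W +
        lam1 * ∑ i, (famRho W i) ^ 2 / (2 * famRho Ws i) +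
        lam2 * ∑ l : Fin T, α ^ ((l : ℕ) + 1) *
          ∑ i, (famRho (fun k => W k - A l k) i) ^ 2 /
            (2 * famRho (fun k => Ws k - A l k) i))
    (W : ℕ → (Fin K → Matrix (Fin m) (Fin n) ℝ))
    (hW : ∀ s, ∀ i, famRho (W s) i ≠ 0)
    (hWA : ∀ s, ∀ (l : Fin T) (i : Fin m), famRho (fun k => W s k - A l k) i ≠ 0)
    (hmin : ∀ s, ∀ V, G (W s) (W (s + 1)) ≤ G (W s) V) :
    (∀ s, F (W (s + 1)) ≤ F (W s)) ∧
      ∃ c : ℝ, Tendsto (fun s => F (W s)) atTop (nhds c) := by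
  have aux : ∀ a b : ℝ, 0 ≤ a → 0 < b → a ≤ a ^ 2 / (2 * b) + b / 2 := by
    intro a b ha hb
    rw [← sub_nonneg]
    have h : a ^ 2 / (2 * b) + b / 2 - a = (a - b) ^ 2 / (2 * b) := by
      field_simp; ring
    rw [h]; positivity
  have hρpos : ∀ s i, 0 < famRho (W s) i := fun s i =>
    lt_of_le_of_ne (Real.sqrt_nonneg _) (Ne.symm (hW s i))
  have hρApos : ∀ s (l : Fin T) i, 0 < famRho (fun k => W s k - A l k) i := fun s l i =>
    lt_of_le_of_ne (Real.sqrt_nonneg _) (Ne.symm (hWA s l i))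
  have hdec : ∀ s, F (W (s + 1)) ≤ F (W s) := by
    intro s
    set C : ℝ := lam1 * ∑ i, famRho (W s) i / 2 +
      lam2 * ∑ l : Fin T, α ^ ((l : ℕ) + 1) *
        ∑ i, famRho (fun k => W s k - A l k) i / 2 with hC
    have hFG : ∀ V, F V ≤ G (W s) V + C := by
      intro V
      rw [hF, hG, hC]
      have h1 : ∑ i, famRho V i ≤
          ∑ i, (famRho V i) ^ 2 / (2 * famRho (W s) i) + ∑ i, famRho (W s) i / 2 := by
        rw [← Finset.sum_add_distrib]
        exact Finset.sum_le_sum fun i _ => aux _ _ (Real.sqrt_nonneg _) (hρpos s i)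
      have h2 : ∀ l : Fin T, ∑ i, famRho (fun k => V k - A l k) i ≤
          ∑ i, (famRho (fun k => V k - A l k) i) ^ 2 /
            (2 * famRho (fun k => W s k - A l k) i) +
          ∑ i, famRho (fun k => W s k - A l k) i / 2 := by
        intro l
        rw [← Finset.sum_add_distrib]
        exact Finset.sum_le_sum fun i _ => aux _ _ (Real.sqrt_nonneg _) (hρApos s l i)
      have hA : lam1 * ∑ i, famRho V i ≤
          lam1 * (∑ i, (famRho V i) ^ 2 / (2 * famRho (W s) i) +
            ∑ i, famRho (W s) i / 2) := mul_le_mul_of_nonneg_left h1 hlam1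
      have hB : lam2 * ∑ l : Fin T, α ^ ((l : ℕ) + 1) *
            ∑ i, famRho (fun k => V k - A l k) i ≤
          lam2 * ∑ l : Fin T, α ^ ((l : ℕ) + 1) *
            (∑ i, (famRho (fun k => V k - A l k) i) ^ 2 /
                (2 * famRho (fun k => W s k - A l k) i) +
              ∑ i, famRho (fun k => W s k - A l k) i / 2) :=
        mul_le_mul_of_nonneg_left
          (Finset.sum_le_sum fun l _ => mul_le_mul_of_nonneg_left (h2 l) (pow_nonneg hα _))
          hlam2
      simp only [mul_add, Finset.sum_add_distrib] at hA hB ⊢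
      linarith
    have hGG : G (W s) (W s) + C = F (W s) := by
      rw [hF, hG, hC]
      have e1 : ∀ i, (famRho (W s) i) ^ 2 / (2 * famRho (W s) i) = famRho (W s) i / 2 := by
        intro i
        have h := hW s i
        field_simp
      have e2 : ∀ (l : Fin T) i, (famRho (fun k => W s k - A l k) i) ^ 2 /
          (2 * famRho (fun k => W s k - A l k) i) =
          famRho (fun k => W s k - A l k) i / 2 := by
        intro l i
        have h := hWA s l i
        field_simp
      simp only [e1, e2, ← Finset.sum_div, ← mul_div_assoc]
      ring
    calc F (W (s + 1)) ≤ G (W s) (W (s + 1)) + C := hFG _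
      _ ≤ G (W s) (W s) + C := add_le_add_left (hmin s (W s)) C
      _ = F (W s) := hGG
  have hF0 : ∀ V, 0 ≤ F V := by
    intro V
    rw [hF]
    have h1 : 0 ≤ famLS B X V := by
      unfold famLS; positivity
    have h2 : (0:ℝ) ≤ ∑ i, famRho V i :=
      Finset.sum_nonneg fun i _ => Real.sqrt_nonneg _
    have h3 : (0:ℝ) ≤ ∑ l : Fin T, α ^ ((l : ℕ) + 1) *
        ∑ i, famRho (fun k => V k - A l k) i :=
      Finset.sum_nonneg fun l _ => mul_nonneg (pow_nonneg hα _)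
        (Finset.sum_nonneg fun i _ => Real.sqrt_nonneg _)
    have := mul_nonneg hlam1 h2
    have := mul_nonneg hlam2 h3
    linarith
  refine ⟨hdec, ?_⟩
  have hanti : Antitone fun s => F (W s) := antitone_nat_of_succ_le fun s => hdec s
  exact ⟨_, tendsto_atTop_ciInf hanti ⟨0, by rintro x ⟨s, rfl⟩; exact hF0 _⟩⟩
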